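/- Let A1, ..., A_{n+1} be affinely independent points in ℝ^n, let P be a point with barycentric coordinates (p_1,...,p_{n+1}), Σ p_i = 1, all p_i ≠ 0, and let S be the sphere of radius 1 centered at P. Let A_i* denote the pole of the hyperplane h_i (the sideplane opposite A_i) with respect to S, i.e., the inverse of the foot of the perpendicular from P to h_i. Then Σ_i p_i A_i* = P; in other words, P has the same barycentric coordinates with respect to the polar simplex A_1*...A_{n+1}* as with respect to A_1...A_{n+1}. -/

import Mathlib

/-- If `Aᵢ*` is the pole, with respect to the unit sphere centered at `P`, of
the sideplane `hᵢ` opposite `Aᵢ`, then `P` has the same barycentric coordinates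
with respect to the polar simplex `A₁* ⋯ A_{n+1}*` as with respect to
`A₁ ⋯ A_{n+1}`: `∑ pᵢ • Aᵢ* = P`. -/
theorem polar_simplex_same_barycentrics (n : ℕ) (hn : 1 < n)
    (A : Fin (n + 1) → EuclideanSpace ℝ (Fin n)) (hA : AffineIndependent ℝ A)
    (p : Fin (n + 1) → ℝ) (hp : ∀ i, p i ≠ 0) (hsum : ∑ i, p i = 1)
    (P : EuclideanSpace ℝ (Fin n)) (hP : P = ∑ i, p i • A i)
    (Astar : Fin (n + 1) → EuclideanSpace ℝ (Fin n))
    (hpolar : ∀ i, (affineSpan ℝ (A '' {i}ᶜ) : Set (EuclideanSpace ℝ (Fin n))) =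
      {R | inner ℝ (R - P) (Astar i - P) = (1 : ℝ)}) :
    ∑ i, p i • Astar i = P := by
  classical
  -- key fact: for j ≠ i, ⟪A j - P, Astar i - P⟫ = 1
  have key : ∀ i j, j ≠ i → (inner ℝ (A j - P) (Astar i - P) : ℝ) = 1 := by
    intro i j hj
    have hmem : A j ∈ (affineSpan ℝ (A '' {i}ᶜ) : Set (EuclideanSpace ℝ (Fin n))) := by
      apply subset_affineSpan
      exact Set.mem_image_of_mem A (by simpa using hj)
    rw [hpolar i] at hmem
    exact hmem
  -- barycenter: ∑ p j • (A j - P) = 0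
  have hbary : ∑ j, p j • (A j - P) = 0 := by
    simp only [smul_sub, Finset.sum_sub_distrib, ← Finset.sum_smul, hsum, one_smul, ← hP,
      sub_self]
  -- diagonal term
  have hdiag : ∀ i, p i * (inner ℝ (A i - P) (Astar i - P) : ℝ) = p i - 1 := by
    intro i
    have h0 : (inner ℝ (∑ j, p j • (A j - P)) (Astar i - P) : ℝ) = 0 := by
      rw [hbary, inner_zero_left]
    rw [sum_inner] at h0
    simp only [real_inner_smul_left] at h0
    rw [← Finset.add_sum_erase _ _ (Finset.mem_univ i)] at h0
    have hrest : ∑ j ∈ Finset.univ.erase i, p j * (inner ℝ (A j - P) (Astar i - P) : ℝ)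
        = ∑ j ∈ Finset.univ.erase i, p j := by
      apply Finset.sum_congr rfl
      intro j hj
      rw [key i j (Finset.ne_of_mem_erase hj), mul_one]
    rw [hrest, Finset.sum_erase_eq_sub (Finset.mem_univ i), hsum] at h0
    linarith
  set v : EuclideanSpace ℝ (Fin n) := ∑ i, p i • (Astar i - P) with hv
  have hperp : ∀ j, (inner ℝ (A j - P) v : ℝ) = 0 := by
    intro j
    rw [hv, inner_sum]
    simp only [real_inner_smul_right]
    rw [← Finset.add_sum_erase _ _ (Finset.mem_univ j)]
    have hrest : ∑ i ∈ Finset.univ.erase j, p i * (inner ℝ (A j - P) (Astar i - P) : ℝ)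
        = ∑ i ∈ Finset.univ.erase j, p i := by
      apply Finset.sum_congr rfl
      intro i hi
      rw [key i j (Ne.symm (Finset.ne_of_mem_erase hi)), mul_one]
    rw [hrest, Finset.sum_erase_eq_sub (Finset.mem_univ j), hsum, hdiag]
    ring
  -- span of {A j - P} is ⊤
  have htop : affineSpan ℝ (Set.range A) = ⊤ := by
    rw [hA.affineSpan_eq_top_iff_card_eq_finrank_add_one]
    simp [finrank_euclideanSpace]
  have hvtop : Submodule.span ℝ (Set.range (fun j => A j - P)) = ⊤ := by
    rw [eq_top_iff]
    have hvs := AffineSubspace.vectorSpan_eq_top_of_affineSpan_eq_top ℝ _ _ htop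
    rw [← hvs]
    rw [vectorSpan_eq_span_vsub_set_right ℝ (Set.mem_range_self (0 : Fin (n+1)))]
    apply Submodule.span_le.2
    rintro x ⟨y, ⟨j, rfl⟩, rfl⟩
    show A j -ᵥ A 0 ∈ _
    have : A j -ᵥ A 0 = (A j - P) - (A 0 - P) := by simp [vsub_eq_sub]
    rw [this]
    exact sub_mem (Submodule.subset_span ⟨j, rfl⟩) (Submodule.subset_span ⟨0, rfl⟩)
  have hv0 : v = 0 := by
    have : v ∈ (Submodule.span ℝ (Set.range (fun j => A j - P)))ᗮ := by
      rw [Submodule.mem_orthogonal]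
      intro u hu
      induction hu using Submodule.span_induction with
      | mem x hx => obtain ⟨j, rfl⟩ := hx; exact hperp j
      | zero => simp
      | add x y _ _ hx hy => rw [inner_add_left, hx, hy, add_zero]
      | smul a x _ hx => rw [inner_smul_left, hx, mul_zero]
    rw [hvtop, Submodule.top_orthogonal_eq_bot, Submodule.mem_bot] at this
    exact this
  have : ∑ i, p i • Astar i - P = v := by
    rw [hv]
    simp only [smul_sub, Finset.sum_sub_distrib, ← Finset.sum_smul, hsum, one_smul]
  rw [hv0] at this
  exact sub_eq_zero.mp this
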